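/- Fix φ₀ ∈ L²(ℝ), h ∈ (0,1], and set α_n = h (P_{≤π/(2h)} φ₀)(hn), where P_{≤N} is a smooth Littlewood–Paley projection to frequencies |ξ| ≤ 2N. Then for every m ∈ ℕ, Σ_{|n|≥m} |α_n|² ≲ h ∫_{|x| ≥ (m - 1/2)h} |ℳφ₀(x)|² dx, where ℳφ₀ is the Hardy–Littlewood maximal function of φ₀, with implicit constant independent of h and m. -/

import Mathlib

open MeasureTheory Real

/-- The centered Hardy–Littlewood maximal function of `φ`. -/
noncomputable def cmax (φ : ℝ → ℂ) (x : ℝ) : ENNReal :=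
  ⨆ (r : ℝ) (_ : 0 < r),
    (ENNReal.ofReal (2 * r))⁻¹ * ∫⁻ y in Set.Ioo (x - r) (x + r), (‖φ y‖₊ : ENNReal)

lemma cmax_interval (f : ℝ → ℂ) {y r : ℝ} (hr : 0 < r) :
    ∫⁻ u in Set.Ioo (y - r) (y + r), (‖f u‖₊ : ENNReal)
      ≤ ENNReal.ofReal (2 * r) * cmax f y := by
  have h1 : (ENNReal.ofReal (2 * r))⁻¹ *
      ∫⁻ u in Set.Ioo (y - r) (y + r), (‖f u‖₊ : ENNReal) ≤ cmax f y :=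
    le_iSup_of_le r (le_iSup_of_le hr le_rfl)
  exact (ENNReal.inv_mul_le_iff (ENNReal.ofReal_pos.mpr (by linarith)).ne'
    ENNReal.ofReal_ne_top).mp h1

/-- Dyadic annuli at scale `1/N`. -/
def ann (N : ℝ) : ℕ → Set ℝ
  | 0 => {t : ℝ | |t| ≤ 1 / N}
  | (j+1) => {t : ℝ | 2 ^ j / N < |t| ∧ |t| ≤ 2 ^ (j+1) / N}

lemma ann_measurable (N : ℝ) (j : ℕ) : MeasurableSet (ann N j) := by
  cases j with
  | zero =>
      exact continuous_abs.measurable measurableSet_Iic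
  | succ j =>
      exact continuous_abs.measurable measurableSet_Ioc

lemma ann_cover {N : ℝ} (hN : 0 < N) : (Set.univ : Set ℝ) = ⋃ j, ann N j := by
  ext t
  simp only [Set.mem_univ, true_iff, Set.mem_iUnion]
  by_cases h0 : |t| ≤ 1 / N
  · exact ⟨0, h0⟩
  · push_neg at h0
    have h0' : 1 < N * |t| := by
      rw [div_lt_iff₀ hN] at h0; linarith [h0]
    obtain ⟨k, hk⟩ := pow_unbounded_of_one_lt (N * |t|) (one_lt_two (α := ℝ))
    have hex : ∃ k, N * |t| ≤ 2 ^ (k + 1) :=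
      ⟨k, hk.le.trans (pow_le_pow_right₀ (by norm_num) (Nat.le_succ k))⟩
    classical
    set k₀ := Nat.find hex with hk₀
    refine ⟨k₀ + 1, ?_, ?_⟩
    · -- 2 ^ k₀ / N < |t|
      rw [div_lt_iff₀ hN]
      cases hk0 : k₀ with
      | zero => simpa [hk0] using (by nlinarith : (2:ℝ)^(0:ℕ) < |t| * N)
      | succ i =>
          have hni : ¬ (N * |t| ≤ 2 ^ (i + 1)) := by
            have := Nat.find_min hex (m := i) (by omega)
            exact this
          push_neg at hni
          calc (2:ℝ) ^ (i+1) < N * |t| := hni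
            _ = |t| * N := mul_comm _ _
    · rw [le_div_iff₀ hN]
      have := Nat.find_spec hex
      calc |t| * N = N * |t| := mul_comm _ _
        _ ≤ 2 ^ (k₀ + 1) := this

lemma key (ψ : SchwartzMap ℝ ℂ) {D : ℝ} (hD : 0 ≤ D)
    (hψ : ∀ s : ℝ, (1 + s ^ 2) * ‖ψ s‖ ≤ D)
    (f : ℝ → ℂ) {h : ℝ} (hh0 : 0 < h) (hh1 : h ≤ 1) {x y : ℝ}
    (hxy : |x - y| ≤ h / 2) :
    ∫⁻ t : ℝ, (‖((π / (2 * h)) • ψ ((π / (2 * h)) * t)) * f (x - t)‖₊ : ENNReal)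
      ≤ ENNReal.ofReal (64 * D) * cmax f y := by
  have hπ := Real.pi_pos
  have hπ4 := Real.pi_le_four
  set N : ℝ := π / (2 * h) with hN
  have hNpos : 0 < N := by positivity
  set G : ℝ → ENNReal := fun t => (‖(N • ψ (N * t)) * f (x - t)‖₊ : ENNReal) with hG
  -- the kernel bound constants
  set κ : ℕ → ℝ := fun j => Nat.rec (N * D) (fun i _ => N * D / 4 ^ i) j with hκ
  have hκ0 : κ 0 = N * D := rfl
  have hκs : ∀ i, κ (i + 1) = N * D / 4 ^ i := fun i => rfl
  -- pointwise kernel bound on each annulus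
  have hker : ∀ j, ∀ t ∈ ann N j, (‖N • ψ (N * t)‖₊ : ENNReal) ≤ ENNReal.ofReal (κ j) := by
    intro j t ht
    rw [← ENNReal.ofReal_coe_nnreal, coe_nnnorm]
    apply ENNReal.ofReal_le_ofReal
    have hsn : ‖N • ψ (N * t)‖ = N * ‖ψ (N * t)‖ := by
      rw [norm_smul, Real.norm_eq_abs, abs_of_pos hNpos]
    rw [hsn]
    cases j with
    | zero =>
        rw [hκ0]
        have h1 : ‖ψ (N * t)‖ ≤ D := by
          nlinarith [hψ (N * t), norm_nonneg (ψ (N * t)),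
            mul_nonneg (sq_nonneg (N * t)) (norm_nonneg (ψ (N * t)))]
        exact mul_le_mul_of_nonneg_left h1 hNpos.le
    | succ i =>
        rw [hκs]
        obtain ⟨ht1, _⟩ := ht
        have habs : (2:ℝ) ^ i < N * |t| := by
          rw [div_lt_iff₀ hNpos] at ht1; linarith [ht1]
        have hsq : (4:ℝ) ^ i ≤ (N * t) ^ 2 := by
          have h4 : (4:ℝ) ^ i = ((2:ℝ) ^ i) ^ 2 := by
            rw [← pow_mul, mul_comm, pow_mul]; norm_num
          have : (N * |t|) ^ 2 = (N * t) ^ 2 := by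
            rw [mul_pow, mul_pow, sq_abs]
          nlinarith [habs, pow_pos (two_pos (α := ℝ)) i, hNpos, abs_nonneg t]
        rw [le_div_iff₀ (by positivity)]
        have := hψ (N * t)
        nlinarith [norm_nonneg (ψ (N * t)), hNpos,
          mul_le_mul_of_nonneg_left this hNpos.le,
          mul_le_mul_of_nonneg_left hsq (mul_nonneg hNpos.le (norm_nonneg (ψ (N * t))))]
  -- per-annulus integral bound
  have hκnn : ∀ j, 0 ≤ κ j := by
    intro j
    cases j with
    | zero => rw [hκ0]; positivity
    | succ i => rw [hκs]; positivity
  have hann : ∀ j, ∫⁻ t in ann N j, G t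
      ≤ ENNReal.ofReal (32 * D * (1 / 2) ^ j) * cmax f y := by
    intro j
    set ρ : ℝ := 2 ^ (j + 1) / N with hρ
    have hρpos : 0 < ρ := by positivity
    have step1 : ∫⁻ t in ann N j, G t
        ≤ ENNReal.ofReal (κ j) * ∫⁻ t in ann N j, (‖f (x - t)‖₊ : ENNReal) := by
      rw [← lintegral_const_mul' _ _ ENNReal.ofReal_ne_top]
      apply setLIntegral_mono' (ann_measurable N j)
      intro t ht
      rw [hG]
      simp only [nnnorm_mul, ENNReal.coe_mul]
      exact mul_le_mul_left (hker j t ht) _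
    have hsub1 : ann N j ⊆ Set.Ioo (-ρ) ρ := by
      intro t ht
      have htle : |t| ≤ 2 ^ j / N := by
        cases j with
        | zero => simpa [ann] using ht
        | succ i => exact ht.2
      have hlt : |t| < ρ := by
        refine lt_of_le_of_lt htle ?_
        rw [hρ, div_lt_div_iff₀ hNpos hNpos]
        have : (2:ℝ) ^ j < 2 ^ (j + 1) := pow_lt_pow_right₀ one_lt_two (Nat.lt_succ_self j)
        nlinarith
      exact Set.mem_Ioo.mpr (abs_lt.mp hlt)
    have step2 : ∫⁻ t in ann N j, (‖f (x - t)‖₊ : ENNReal)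
        ≤ ∫⁻ t in Set.Ioo (-ρ) ρ, (‖f (x - t)‖₊ : ENNReal) :=
      lintegral_mono_set hsub1
    have step3 : ∫⁻ t in Set.Ioo (-ρ) ρ, (‖f (x - t)‖₊ : ENNReal)
        = ∫⁻ u in Set.Ioo (x - ρ) (x + ρ), (‖f u‖₊ : ENNReal) := by
      have mp : MeasurePreserving (fun t : ℝ => x - t) volume volume :=
        Measure.measurePreserving_sub_left volume x
      have emb : MeasurableEmbedding (fun t : ℝ => x - t) :=
        (MeasurableEquiv.subLeft x).measurableEmbedding
      have himg : (fun t : ℝ => x - t) '' Set.Ioo (-ρ) ρ = Set.Ioo (x - ρ) (x + ρ) := by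
        ext u
        simp only [Set.mem_image, Set.mem_Ioo]
        constructor
        · rintro ⟨t, ⟨a, b⟩, rfl⟩; constructor <;> linarith
        · rintro ⟨a, b⟩; exact ⟨x - u, ⟨by linarith, by linarith⟩, by ring⟩
      have heq := mp.setLIntegral_comp_emb emb (fun u => (‖f u‖₊ : ENNReal))
        (Set.Ioo (-ρ) ρ)
      rw [himg] at heq
      exact heq
    have hhalf : h / 2 ≤ ρ := by
      have h2ρ : 2 / N ≤ ρ := by
        rw [hρ]
        rw [div_le_div_iff₀ hNpos hNpos]
        have h21 : (2:ℝ) ≤ 2 ^ (j + 1) := by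
          calc (2:ℝ) = 2 ^ 1 := (pow_one 2).symm
            _ ≤ 2 ^ (j + 1) := pow_le_pow_right₀ one_le_two (by omega)
        nlinarith
      have h2N : 2 / N = 4 * h / π := by
        rw [hN]; field_simp; ring
      rw [h2N] at h2ρ
      have : h / 2 ≤ 4 * h / π := by
        rw [div_le_div_iff₀ (by norm_num) hπ]
        nlinarith
      linarith
    have hsub2 : Set.Ioo (x - ρ) (x + ρ) ⊆ Set.Ioo (y - 2 * ρ) (y + 2 * ρ) := by
      apply Set.Ioo_subset_Ioo <;>
        · have := abs_le.mp hxy; obtain ⟨a, b⟩ := this; linarith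
    have step4 : ∫⁻ u in Set.Ioo (x - ρ) (x + ρ), (‖f u‖₊ : ENNReal)
        ≤ ENNReal.ofReal (2 * (2 * ρ)) * cmax f y := by
      calc ∫⁻ u in Set.Ioo (x - ρ) (x + ρ), (‖f u‖₊ : ENNReal)
          ≤ ∫⁻ u in Set.Ioo (y - 2 * ρ) (y + 2 * ρ), (‖f u‖₊ : ENNReal) :=
            lintegral_mono_set hsub2
        _ ≤ ENNReal.ofReal (2 * (2 * ρ)) * cmax f y := cmax_interval f (by positivity)
    calc ∫⁻ t in ann N j, G t
        ≤ ENNReal.ofReal (κ j) * ∫⁻ t in ann N j, (‖f (x - t)‖₊ : ENNReal) := step1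
      _ ≤ ENNReal.ofReal (κ j) * (ENNReal.ofReal (2 * (2 * ρ)) * cmax f y) := by
          apply mul_le_mul_right
          exact (step2.trans (le_of_eq step3)).trans step4
      _ = ENNReal.ofReal (κ j) * ENNReal.ofReal (2 * (2 * ρ)) * cmax f y := by ring
      _ ≤ ENNReal.ofReal (32 * D * (1 / 2) ^ j) * cmax f y := by
          apply mul_le_mul_left
          rw [← ENNReal.ofReal_mul (hκnn j)]
          apply ENNReal.ofReal_le_ofReal
          cases j with
          | zero =>
              rw [hκ0, hρ]
              have : N * D * (2 * (2 * (2 ^ (0+1) / N))) = 8 * D := by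
                field_simp; ring
              rw [this]; norm_num; nlinarith [hD]
          | succ i =>
              rw [hκs, hρ]
              have h4 : (4:ℝ) ^ i = ((2:ℝ) ^ i) ^ 2 := by
                rw [← pow_mul, mul_comm, pow_mul]; norm_num
              have h2 : ((2:ℝ)) ^ (i + 1 + 1) = 4 * 2 ^ i := by ring
              rw [le_iff_lt_or_eq]; right
              field_simp [h4]
              have key : ((1:ℝ)/2)^i * ((2:ℝ)^i)^2 = 2^i := by
                rw [one_div, inv_pow, sq, ← mul_assoc, inv_mul_cancel₀ (by positivity), one_mul]
              rw [h4]; linear_combination (-(D*16)) * key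
  -- sum up
  calc ∫⁻ t : ℝ, G t = ∫⁻ t in Set.univ, G t := (setLIntegral_univ _).symm
    _ = ∫⁻ t in ⋃ j, ann N j, G t := by rw [← ann_cover hNpos]
    _ ≤ ∑' j, ∫⁻ t in ann N j, G t := lintegral_iUnion_le _ _
    _ ≤ ∑' j : ℕ, ENNReal.ofReal (32 * D * (1 / 2) ^ j) * cmax f y :=
        ENNReal.tsum_le_tsum hann
    _ = (∑' j : ℕ, ENNReal.ofReal (32 * D * (1 / 2) ^ j)) * cmax f y :=
        ENNReal.tsum_mul_right
    _ = ENNReal.ofReal (64 * D) * cmax f y := by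
        rw [← ENNReal.ofReal_tsum_of_nonneg (fun j => by positivity)
          (summable_geometric_two.mul_left (32 * D))]
        congr 1
        rw [tsum_mul_left, tsum_geometric_two]
        ring

/-- Locality of the initial data `α_n = h (P_{≤π/(2h)}φ₀)(hn)`, where the smooth
Littlewood–Paley projection is realized as convolution with the Schwartz kernel
`N ψ(N·)` at scale `N = π/(2h)`:  `Σ_{|n|≥m} |α_n|² ≲ h ∫_{|x|≥(m-1/2)h} |ℳφ₀|²`,
uniformly in `h ∈ (0,1]` and `m ∈ ℕ`. -/
theorem stmt4 (ψ : SchwartzMap ℝ ℂ) :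
    ∃ C > 0, ∀ h : ℝ, 0 < h → h ≤ 1 → ∀ φ₀ : ℝ → ℂ, MemLp φ₀ 2 (volume : Measure ℝ) →
    ∀ m : ℕ,
    ENNReal.ofReal (∑' n : {n : ℤ // (m : ℤ) ≤ |n|},
        ‖h • ∫ y : ℝ, ((π / (2 * h)) • ψ ((π / (2 * h)) * y)) * φ₀ (h * (n : ℤ) - y)‖ ^ 2)
      ≤ ENNReal.ofReal (C * h) *
          ∫⁻ x in {x : ℝ | ((m : ℝ) - 1 / 2) * h ≤ |x|}, (cmax φ₀ x) ^ 2 := by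
  obtain ⟨C₀, hC₀⟩ := ψ.decay 0 0
  obtain ⟨C₂, hC₂⟩ := ψ.decay 2 0
  set D : ℝ := |C₀| + |C₂| + 1 with hDdef
  have hD : 0 ≤ D := by positivity
  have hψD : ∀ s : ℝ, (1 + s ^ 2) * ‖ψ s‖ ≤ D := by
    intro s
    have h0 := hC₀.2 s
    have h2 := hC₂.2 s
    rw [norm_iteratedFDeriv_zero] at h0 h2
    simp only [pow_zero, one_mul] at h0
    have hs2 : ‖s‖ ^ 2 = s ^ 2 := by rw [Real.norm_eq_abs, sq_abs]
    rw [hs2] at h2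
    have ha0 : C₀ ≤ |C₀| := le_abs_self _
    have ha2 : C₂ ≤ |C₂| := le_abs_self _
    nlinarith [norm_nonneg (ψ s), sq_nonneg s]
  refine ⟨(64 * D) ^ 2, by positivity, ?_⟩
  intro h hh0 hh1 φ₀ _hφ m
  set N : ℝ := π / (2 * h) with hN
  set z : {n : ℤ // (m : ℤ) ≤ |n|} → ℂ :=
    fun n => ∫ y : ℝ, (N • ψ (N * y)) * φ₀ (h * (n : ℤ) - y) with hz
  set I : {n : ℤ // (m : ℤ) ≤ |n|} → Set ℝ :=
    fun n => Set.Ioo (h * (n : ℤ) - h / 2) (h * (n : ℤ) + h / 2) with hI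
  set S : Set ℝ := {x : ℝ | ((m : ℝ) - 1 / 2) * h ≤ |x|} with hS
  -- per-n estimate
  have hterm : ∀ n, ENNReal.ofReal (‖h • z n‖ ^ 2)
      ≤ ENNReal.ofReal h * ∫⁻ x in I n, ENNReal.ofReal ((64 * D) ^ 2) * cmax φ₀ x ^ 2 := by
    intro n
    have hzb : ∀ x ∈ I n, ENNReal.ofReal (‖z n‖ ^ 2)
        ≤ ENNReal.ofReal ((64 * D) ^ 2) * cmax φ₀ x ^ 2 := by
      intro x hx
      obtain ⟨hx1, hx2⟩ := hx
      have hxy : |h * ((n : ℤ) : ℝ) - x| ≤ h / 2 :=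
        le_of_lt (abs_lt.mpr ⟨by linarith, by linarith⟩)
      have h1 : (‖z n‖₊ : ENNReal) ≤ ENNReal.ofReal (64 * D) * cmax φ₀ x := by
        refine le_trans (enorm_integral_le_lintegral_enorm _) ?_
        exact key ψ hD hψD φ₀ hh0 hh1 hxy
      calc ENNReal.ofReal (‖z n‖ ^ 2)
          = (‖z n‖₊ : ENNReal) ^ 2 := by
            rw [ENNReal.ofReal_pow (norm_nonneg _), ← coe_nnnorm, ENNReal.ofReal_coe_nnreal]
        _ ≤ (ENNReal.ofReal (64 * D) * cmax φ₀ x) ^ 2 := pow_le_pow_left' h1 2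
        _ = ENNReal.ofReal ((64 * D) ^ 2) * cmax φ₀ x ^ 2 := by
            rw [mul_pow, ENNReal.ofReal_pow (by positivity)]
    have hnorm : ‖h • z n‖ ^ 2 = h * (h * ‖z n‖ ^ 2) := by
      rw [norm_smul, Real.norm_eq_abs, abs_of_pos hh0]; ring
    have hvol : (volume : Measure ℝ) (I n) = ENNReal.ofReal h := by
      rw [hI]
      simp only [Real.volume_Ioo]
      congr 1
      ring
    calc ENNReal.ofReal (‖h • z n‖ ^ 2)
        = ENNReal.ofReal h * ENNReal.ofReal (h * ‖z n‖ ^ 2) := by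
          rw [hnorm, ENNReal.ofReal_mul hh0.le]
      _ = ENNReal.ofReal h * ∫⁻ _x in I n, ENNReal.ofReal (‖z n‖ ^ 2) := by
          rw [setLIntegral_const, hvol]
          congr 1
          rw [← ENNReal.ofReal_mul (by positivity : (0:ℝ) ≤ ‖z n‖ ^ 2)]
          congr 1
          ring
      _ ≤ ENNReal.ofReal h * ∫⁻ x in I n, ENNReal.ofReal ((64 * D) ^ 2) * cmax φ₀ x ^ 2 := by
          apply mul_le_mul_right
          exact setLIntegral_mono' measurableSet_Ioo hzb
  -- disjointness of the intervals
  have hdisj : Pairwise (Function.onFun Disjoint I) := by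
    intro a b hab
    have hne : ((a : ℤ) : ℝ) ≠ ((b : ℤ) : ℝ) := by
      exact_mod_cast fun hc => hab (Subtype.ext (by exact_mod_cast hc))
    rw [Function.onFun, hI, Set.Ioo_disjoint_Ioo]
    rcases lt_or_gt_of_ne hne with hlt | hlt
    · have h1 : ((a : ℤ) : ℝ) + 1 ≤ ((b : ℤ) : ℝ) := by
        exact_mod_cast Int.add_one_le_iff.mpr (by exact_mod_cast hlt)
      calc min (h * (a : ℤ) + h / 2) (h * (b : ℤ) + h / 2)
          ≤ h * (a : ℤ) + h / 2 := min_le_left _ _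
        _ ≤ h * (b : ℤ) - h / 2 := by nlinarith
        _ ≤ max (h * (a : ℤ) - h / 2) (h * (b : ℤ) - h / 2) := le_max_right _ _
    · have h1 : ((b : ℤ) : ℝ) + 1 ≤ ((a : ℤ) : ℝ) := by
        exact_mod_cast Int.add_one_le_iff.mpr (by exact_mod_cast hlt)
      calc min (h * (a : ℤ) + h / 2) (h * (b : ℤ) + h / 2)
          ≤ h * (b : ℤ) + h / 2 := min_le_right _ _
        _ ≤ h * (a : ℤ) - h / 2 := by nlinarith
        _ ≤ max (h * (a : ℤ) - h / 2) (h * (b : ℤ) - h / 2) := le_max_left _ _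
  -- the intervals live in the far region
  have hsub : (⋃ n, I n) ⊆ S := by
    rintro t ht
    obtain ⟨n, hn⟩ := Set.mem_iUnion.mp ht
    obtain ⟨h1, h2⟩ := hn
    have hmn : (m : ℝ) ≤ |((n : ℤ) : ℝ)| := by
      have := n.2
      rw [← Int.cast_abs]
      exact_mod_cast this
    have habs : |h * ((n : ℤ) : ℝ)| - |t| ≤ |h * ((n : ℤ) : ℝ) - t| :=
      abs_sub_abs_le_abs_sub _ _
    have habs2 : |h * ((n : ℤ) : ℝ) - t| ≤ h / 2 :=
      le_of_lt (abs_lt.mpr ⟨by linarith, by linarith⟩)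
    have habs3 : |h * ((n : ℤ) : ℝ)| = h * |((n : ℤ) : ℝ)| := by
      rw [abs_mul, abs_of_pos hh0]
    rw [hS, Set.mem_setOf_eq]
    have : h * (m : ℝ) ≤ h * |((n : ℤ) : ℝ)| :=
      mul_le_mul_of_nonneg_left hmn hh0.le
    nlinarith [abs_nonneg t]
  by_cases hsum : Summable (fun n : {n : ℤ // (m : ℤ) ≤ |n|} => ‖h • z n‖ ^ 2)
  · rw [ENNReal.ofReal_tsum_of_nonneg (fun n => by positivity) hsum]
    calc ∑' n, ENNReal.ofReal (‖h • z n‖ ^ 2)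
        ≤ ∑' n, (ENNReal.ofReal h *
            ∫⁻ x in I n, ENNReal.ofReal ((64 * D) ^ 2) * cmax φ₀ x ^ 2) :=
          ENNReal.tsum_le_tsum hterm
      _ = ENNReal.ofReal h * ∑' n, ∫⁻ x in I n,
            ENNReal.ofReal ((64 * D) ^ 2) * cmax φ₀ x ^ 2 := ENNReal.tsum_mul_left
      _ = ENNReal.ofReal h * ∫⁻ x in ⋃ n, I n,
            ENNReal.ofReal ((64 * D) ^ 2) * cmax φ₀ x ^ 2 := by
          rw [lintegral_iUnion (fun n => measurableSet_Ioo) hdisj]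
      _ ≤ ENNReal.ofReal h * ∫⁻ x in S,
            ENNReal.ofReal ((64 * D) ^ 2) * cmax φ₀ x ^ 2 := by
          exact mul_le_mul_right (lintegral_mono_set hsub) _
      _ = ENNReal.ofReal ((64 * D) ^ 2 * h) * ∫⁻ x in S, cmax φ₀ x ^ 2 := by
          rw [lintegral_const_mul' _ _ ENNReal.ofReal_ne_top,
            ENNReal.ofReal_mul (by positivity)]
          ring
  · rw [tsum_eq_zero_of_not_summable hsum]
    simp
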